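/- For odd g, the extremal graph G*_{(n,g,β)} (cycle C_g with the tree T*_{β−(g+1)/2, n−2β+1} attached at one cycle vertex by its root) is a unicyclic graph of order n with girth g and matching number exactly β, provided n ≥ 2β ≥ 3g. -/

import Mathlib

open SimpleGraph Finset

noncomputable def wienerIndex {V : Type*} [Fintype V] (G : SimpleGraph V) : ℕ :=
  (∑ u : V, ∑ v : V, G.dist u v) / 2

noncomputable def matchingNumber {V : Type*} [Fintype V] (G : SimpleGraph V) : ℕ :=
  sSup {n | ∃ M : G.Subgraph, M.IsMatching ∧ M.edgeSet.ncard = n}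

/-- For odd girth `g`, the extremal graph `G*_{(n,g,β)}` on `Fin n`: the cycle `C_g` on
vertices `0,…,g−1`, with the root of the tree `T*_{a,b}` (`a = β−(g+1)/2`,
`b = n−2β+1`) identified with the cycle vertex `0`; the star leaves are
`g,…,g+a+b−1` and each of the first `a` of them carries a pendant vertex
(`u + a + b` is attached to `u` for `g ≤ u < g+a`). -/
def GstarOdd (n g β : ℕ) : SimpleGraph (Fin n) :=
  SimpleGraph.fromRel fun u v =>
    (u.val + 1 = v.val ∧ v.val < g) ∨
    (u.val = 0 ∧ v.val = g - 1) ∨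
    (u.val = 0 ∧ g ≤ v.val ∧ v.val < g + (β - (g+1)/2) + (n - 2*β + 1)) ∨
    (g ≤ u.val ∧ u.val < g + (β - (g+1)/2) ∧ v.val = u.val + (β - (g+1)/2) + (n - 2*β + 1))

/-- For even girth `g`, the extremal graph `G*_{(n,g,β)}` on `Fin n`: the cycle `C_g` on
`0,…,g−1`, with the root of the tree `T*_{a,b}` (`a = β−g/2−1`, `b = n−2β+1`) identified
with the cycle vertex `0` (star leaves `g,…,g+a+b−1`, pendant vertices `u+a+b` attached to
`u` for `g ≤ u < g+a`), and one extra pendant vertex `n−1` attached to the cycle vertex `1`. -/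
def GstarEven (n g β : ℕ) : SimpleGraph (Fin n) :=
  SimpleGraph.fromRel fun u v =>
    (u.val + 1 = v.val ∧ v.val < g) ∨
    (u.val = 0 ∧ v.val = g - 1) ∨
    (u.val = 0 ∧ g ≤ v.val ∧ v.val < g + (β - g/2 - 1) + (n - 2*β + 1)) ∨
    (g ≤ u.val ∧ u.val < g + (β - g/2 - 1) ∧ v.val = u.val + (β - g/2 - 1) + (n - 2*β + 1)) ∨
    (u.val = 1 ∧ v.val = n - 1)


lemma abs_potential {V : Type*} {H : SimpleGraph V} (f : V → ℤ)
    (hf : ∀ x y, H.Adj x y → |f x - f y| ≤ 1) :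
    ∀ {x y : V} (w : H.Walk x y), |f x - f y| ≤ w.length
  | x, _, SimpleGraph.Walk.nil => by simp
  | x, y, SimpleGraph.Walk.cons (v := z) h q => by
      have h1 := hf _ _ h
      have h2 := abs_potential f hf q
      have h3 : |f x - f y| ≤ |f x - f z| + |f z - f y| := abs_sub_le _ _ _
      simp only [SimpleGraph.Walk.length_cons]
      push_cast
      linarith

lemma isAcyclic_of_parent {V : Type*} [LinearOrder V] {H : SimpleGraph V} (p : V → V)
    (hp : ∀ x y, H.Adj x y → (x = p y ∧ p y < y) ∨ (y = p x ∧ p x < x)) :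
    H.IsAcyclic := by
  intro v c hc
  classical
  have hvmem : v ∈ c.support := c.start_mem_support
  set s := c.support.toFinset with hs
  have hsne : s.Nonempty := ⟨v, List.mem_toFinset.mpr hvmem⟩
  set m := s.max' hsne with hmdef
  have hm : m ∈ c.support := List.mem_toFinset.mp (s.max'_mem hsne)
  have hmax : ∀ x ∈ c.support, x ≤ m := fun x hx => s.le_max' x (List.mem_toFinset.mpr hx)
  have hc' := hc.rotate hm
  have hsub : ∀ x ∈ (c.rotate _ hm).support, x ≤ m := by
    intro x hx
    rcases (SimpleGraph.Walk.mem_support_iff _).mp hx with rfl | hx'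
    · exact le_refl _
    · have : x ∈ c.support.tail := ((SimpleGraph.Walk.support_rotate c _ hm).mem_iff).mp hx'
      exact hmax x (List.mem_of_mem_tail this)
  obtain ⟨w0, h, q, hq⟩ := SimpleGraph.Walk.not_nil_iff.mp hc'.not_nil
  rw [hq] at hc'
  have hiff := (SimpleGraph.Walk.cons_isCycle_iff q h).mp hc'
  have hw0mem : w0 ∈ (c.rotate _ hm).support := by
    rw [hq]
    simp only [SimpleGraph.Walk.support_cons, List.mem_cons]
    exact Or.inr q.start_mem_support
  have hw0lt : w0 < m := lt_of_le_of_ne (hsub _ hw0mem) h.ne'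
  rcases hp m w0 h with ⟨h1, h2⟩ | ⟨h1, h2⟩
  · rw [← h1] at h2; exact absurd h2 (lt_asymm hw0lt)
  · obtain ⟨z, h2', q2, hq2⟩ := SimpleGraph.Walk.exists_eq_cons_of_ne h.ne q.reverse
    have hzmem : z ∈ (c.rotate _ hm).support := by
      have : z ∈ q.reverse.support := by
        rw [hq2]
        simp only [SimpleGraph.Walk.support_cons, List.mem_cons]
        exact Or.inr q2.start_mem_support
      rw [SimpleGraph.Walk.support_reverse, List.mem_reverse] at this
      rw [hq]
      simp only [SimpleGraph.Walk.support_cons, List.mem_cons]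
      exact Or.inr this
    have hzlt : z < m := lt_of_le_of_ne (hsub _ hzmem) h2'.ne'
    rcases hp m z h2' with ⟨e1, e2⟩ | ⟨e1, e2⟩
    · rw [← e1] at e2; exact absurd e2 (lt_asymm hzlt)
    · have hzw : z = w0 := by rw [e1, ← h1]
      have hmem : s(m, z) ∈ q.reverse.edges := by
        rw [hq2]; simp
      rw [SimpleGraph.Walk.edges_reverse, List.mem_reverse] at hmem
      rw [hzw] at hmem
      exact hiff.2 hmem

def ER (g a b : ℕ) (x y : ℕ) : Prop :=
  (x + 1 = y ∧ y < g) ∨ (x = 0 ∧ y = g - 1) ∨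
  (x = 0 ∧ g ≤ y ∧ y < g + a + b) ∨ (g ≤ x ∧ x < g + a ∧ y = x + a + b)

def Gs (n g a b : ℕ) : SimpleGraph (Fin n) :=
  SimpleGraph.fromRel fun u v => ER g a b u.val v.val

lemma GstarOdd_eq_Gs (n g β : ℕ) : GstarOdd n g β = Gs n g (β - (g+1)/2) (n - 2*β + 1) := rfl

lemma Gs_adj {n g a b : ℕ} {u v : Fin n} :
    (Gs n g a b).Adj u v ↔ u ≠ v ∧ (ER g a b u.val v.val ∨ ER g a b v.val u.val) :=
  SimpleGraph.fromRel_adj _ _ _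

def phi {n : ℕ} (g a b : ℕ) (hgn : g ≤ n) (i : Fin n) : Sym2 (Fin n) :=
  if h : i.val < g then
    s(i, ⟨(i.val + 1) % g, by
      have : (i.val + 1) % g < g := Nat.mod_lt _ (by omega)
      omega⟩)
  else if i.val < g + a + b then s(⟨0, i.pos⟩, i)
  else s(⟨i.val - (a + b), by have := i.isLt; omega⟩, i)

lemma succ_mod (g j : ℕ) (hj : j < g) :
    ((j + 1) % g = j + 1 ∧ j + 1 < g) ∨ (j = g - 1 ∧ (j + 1) % g = 0) := by
  rcases Nat.lt_or_ge (j + 1) g with h | h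
  · exact Or.inl ⟨Nat.mod_eq_of_lt h, h⟩
  · have : j + 1 = g := by omega
    right
    constructor
    · omega
    · rw [this, Nat.mod_self]


lemma Gs_adj_val {n g a b : ℕ} {u v : Fin n} :
    (Gs n g a b).Adj u v ↔ u.val ≠ v.val ∧ (ER g a b u.val v.val ∨ ER g a b v.val u.val) := by
  rw [Gs_adj, ne_eq, ← Fin.val_eq_val]

section Main

variable {n g a b : ℕ}

lemma phi_mem (hg : 3 ≤ g) (hnn : n = g + 2*a + b) (hgn : g ≤ n) (i : Fin n) :
    phi g a b hgn i ∈ (Gs n g a b).edgeSet := by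
  by_cases h1 : i.val < g
  · rw [phi, dif_pos h1, SimpleGraph.mem_edgeSet, Gs_adj_val]
    dsimp only
    rcases succ_mod g i.val h1 with ⟨hm, hlt⟩ | ⟨he, hm⟩ <;>
      · simp only [ER, true_and, and_true, false_and, and_false, or_false, false_or, true_or, or_true]
        all_goals omega
  · by_cases h2 : i.val < g + a + b
    · rw [phi, dif_neg h1, if_pos h2, SimpleGraph.mem_edgeSet, Gs_adj_val]
      dsimp only
      simp only [ER, true_and, and_true, false_and, and_false, or_false, false_or, true_or, or_true]
      all_goals omega
    · rw [phi, dif_neg h1, if_neg h2, SimpleGraph.mem_edgeSet, Gs_adj_val]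
      dsimp only
      simp only [ER, true_and, and_true, false_and, and_false, or_false, false_or, true_or, or_true]
      have := i.isLt
      all_goals omega

lemma phi_surj_aux (hg : 3 ≤ g) (hnn : n = g + 2*a + b) (hgn : g ≤ n) (u v : Fin n)
    (h : ER g a b u.val v.val) : ∃ i, s(u, v) = phi g a b hgn i := by
  rcases h with ⟨h1, h2⟩ | ⟨h1, h2⟩ | ⟨h1, h2, h3⟩ | ⟨h1, h2, h3⟩
  · refine ⟨u, ?_⟩
    rw [phi, dif_pos (by omega), Sym2.eq_iff]
    left
    refine ⟨rfl, Fin.ext ?_⟩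
    dsimp only
    rw [Nat.mod_eq_of_lt (by omega)]
    omega
  · refine ⟨⟨g-1, by omega⟩, ?_⟩
    have hmod : (g - 1 + 1) % g = 0 := by
      have h' : g - 1 + 1 = g := by omega
      rw [h', Nat.mod_self]
    rw [phi, dif_pos (by dsimp only; omega), Sym2.eq_iff]
    right
    constructor <;> apply Fin.ext <;> dsimp only <;> omega
  · refine ⟨v, ?_⟩
    rw [phi, dif_neg (by omega), if_pos (by omega), Sym2.eq_iff]
    left
    exact ⟨Fin.ext (by dsimp only; omega), rfl⟩
  · refine ⟨v, ?_⟩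
    rw [phi, dif_neg (by omega), if_neg (by omega), Sym2.eq_iff]
    left
    exact ⟨Fin.ext (by dsimp only; omega), rfl⟩

lemma phi_surj (hg : 3 ≤ g) (hnn : n = g + 2*a + b) (hgn : g ≤ n) (e : Sym2 (Fin n))
    (he : e ∈ (Gs n g a b).edgeSet) : ∃ i, e = phi g a b hgn i := by
  induction e with
  | _ u v =>
    rw [SimpleGraph.mem_edgeSet, Gs_adj] at he
    rcases he.2 with h | h
    · exact phi_surj_aux hg hnn hgn u v h
    · obtain ⟨i, hi⟩ := phi_surj_aux hg hnn hgn v u h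
      exact ⟨i, by rw [Sym2.eq_swap]; exact hi⟩

lemma phi_inj (hg : 3 ≤ g) (hnn : n = g + 2*a + b) (hgn : g ≤ n) :
    Function.Injective (phi g a b hgn) := by
  intro i j hij
  simp only [phi] at hij
  apply Fin.ext
  by_cases hi1 : i.val < g <;> by_cases hj1 : j.val < g
  · rw [dif_pos hi1, dif_pos hj1, Sym2.eq_iff] at hij
    rcases succ_mod g i.val hi1 with ⟨hmi, hlti⟩ | ⟨hei, hmi⟩ <;>
      rcases succ_mod g j.val hj1 with ⟨hmj, hltj⟩ | ⟨hej, hmj⟩ <;>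
      rcases hij with ⟨e1, e2⟩ | ⟨e1, e2⟩ <;>
      · have v1 := congrArg Fin.val e1
        have v2 := congrArg Fin.val e2
        try dsimp only at v1
        try dsimp only at v2
        omega
  · exfalso
    rw [dif_pos hi1] at hij
    by_cases hj2 : j.val < g + a + b
    · rw [dif_neg hj1, if_pos hj2, Sym2.eq_iff] at hij
      rcases succ_mod g i.val hi1 with ⟨hmi, hlti⟩ | ⟨hei, hmi⟩ <;>
        rcases hij with ⟨e1, e2⟩ | ⟨e1, e2⟩ <;>
        · have v1 := congrArg Fin.val e1
          have v2 := congrArg Fin.val e2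
          try dsimp only at v1
          try dsimp only at v2
          omega
    · rw [dif_neg hj1, if_neg hj2, Sym2.eq_iff] at hij
      rcases succ_mod g i.val hi1 with ⟨hmi, hlti⟩ | ⟨hei, hmi⟩ <;>
        rcases hij with ⟨e1, e2⟩ | ⟨e1, e2⟩ <;>
        · have v1 := congrArg Fin.val e1
          have v2 := congrArg Fin.val e2
          try dsimp only at v1
          try dsimp only at v2
          omega
  · exfalso
    rw [dif_pos hj1] at hij
    by_cases hi2 : i.val < g + a + b
    · rw [dif_neg hi1, if_pos hi2, Sym2.eq_iff] at hij
      rcases succ_mod g j.val hj1 with ⟨hmj, hltj⟩ | ⟨hej, hmj⟩ <;>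
        rcases hij with ⟨e1, e2⟩ | ⟨e1, e2⟩ <;>
        · have v1 := congrArg Fin.val e1
          have v2 := congrArg Fin.val e2
          try dsimp only at v1
          try dsimp only at v2
          omega
    · rw [dif_neg hi1, if_neg hi2, Sym2.eq_iff] at hij
      rcases succ_mod g j.val hj1 with ⟨hmj, hltj⟩ | ⟨hej, hmj⟩ <;>
        rcases hij with ⟨e1, e2⟩ | ⟨e1, e2⟩ <;>
        · have v1 := congrArg Fin.val e1
          have v2 := congrArg Fin.val e2
          try dsimp only at v1
          try dsimp only at v2
          omega
  · rw [dif_neg hi1, dif_neg hj1] at hij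
    by_cases hi2 : i.val < g + a + b <;> by_cases hj2 : j.val < g + a + b
    · rw [if_pos hi2, if_pos hj2, Sym2.eq_iff] at hij
      rcases hij with ⟨e1, e2⟩ | ⟨e1, e2⟩ <;>
        · have v1 := congrArg Fin.val e1
          have v2 := congrArg Fin.val e2
          try dsimp only at v1
          try dsimp only at v2
          omega
    · rw [if_pos hi2, if_neg hj2, Sym2.eq_iff] at hij
      rcases hij with ⟨e1, e2⟩ | ⟨e1, e2⟩ <;>
        · have v1 := congrArg Fin.val e1
          have v2 := congrArg Fin.val e2
          try dsimp only at v1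
          try dsimp only at v2
          omega
    · rw [if_neg hi2, if_pos hj2, Sym2.eq_iff] at hij
      rcases hij with ⟨e1, e2⟩ | ⟨e1, e2⟩ <;>
        · have v1 := congrArg Fin.val e1
          have v2 := congrArg Fin.val e2
          try dsimp only at v1
          try dsimp only at v2
          omega
    · rw [if_neg hi2, if_neg hj2, Sym2.eq_iff] at hij
      rcases hij with ⟨e1, e2⟩ | ⟨e1, e2⟩ <;>
        · have v1 := congrArg Fin.val e1
          have v2 := congrArg Fin.val e2
          try dsimp only at v1
          try dsimp only at v2
          omega

lemma Gs_edgeSet (hg : 3 ≤ g) (hnn : n = g + 2*a + b) (hgn : g ≤ n) :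
    (Gs n g a b).edgeSet = Set.range (phi g a b hgn) := by
  apply Set.eq_of_subset_of_subset
  · intro e he
    obtain ⟨i, hi⟩ := phi_surj hg hnn hgn e he
    exact ⟨i, hi.symm⟩
  · rintro e ⟨i, rfl⟩
    exact phi_mem hg hnn hgn i

lemma Gs_edgeSet_ncard (hg : 3 ≤ g) (hnn : n = g + 2*a + b) (hgn : g ≤ n) :
    (Gs n g a b).edgeSet.ncard = n := by
  rw [Gs_edgeSet hg hnn hgn, ← Set.image_univ, Set.ncard_image_of_injective _ (phi_inj hg hnn hgn),
    Set.ncard_univ, Nat.card_eq_fintype_card, Fintype.card_fin]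

end Main

lemma lt_n_of_lt {g n k : ℕ} (hk : k < g) (hgn : g ≤ n) : k < n := lt_of_lt_of_le hk hgn

lemma zero_lt_n {g n : ℕ} (hg : 3 ≤ g) (hgn : g ≤ n) : 0 < n := by omega

lemma gsub1_lt {g : ℕ} (hg : 3 ≤ g) : g - 1 < g := by omega

section Walks

variable {n g a b : ℕ}

lemma adj_succ (n g a b : ℕ) (hgn : g ≤ n) (k : ℕ) (hk : k + 1 < g) :
    (Gs n g a b).Adj ⟨k+1, lt_n_of_lt hk hgn⟩ ⟨k, lt_n_of_lt (Nat.lt_of_succ_lt hk) hgn⟩ := by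
  rw [Gs_adj_val]
  dsimp only
  simp only [ER, true_and, and_true, false_and, and_false, or_false, false_or, true_or, or_true]
  all_goals omega

lemma adj_0g1 (n g a b : ℕ) (hg : 3 ≤ g) (hgn : g ≤ n) :
    (Gs n g a b).Adj ⟨0, zero_lt_n hg hgn⟩ ⟨g-1, lt_n_of_lt (gsub1_lt hg) hgn⟩ := by
  rw [Gs_adj_val]
  dsimp only
  simp only [ER, true_and, and_true, false_and, and_false, or_false, false_or, true_or, or_true]
  all_goals omega

def downW (n g a b : ℕ) (hg : 3 ≤ g) (hgn : g ≤ n) :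
    (k : ℕ) → (hk : k < g) → (Gs n g a b).Walk ⟨k, lt_n_of_lt hk hgn⟩ ⟨0, zero_lt_n hg hgn⟩
  | 0, _ => SimpleGraph.Walk.nil
  | k+1, hk => SimpleGraph.Walk.cons (adj_succ n g a b hgn k hk)
      (downW n g a b hg hgn k (Nat.lt_of_succ_lt hk))

lemma downW_length (hg : 3 ≤ g) (hgn : g ≤ n) (k : ℕ) (hk : k < g) :
    (downW n g a b hg hgn k hk).length = k := by
  induction k with
  | zero => rfl
  | succ m ih => rw [downW, SimpleGraph.Walk.length_cons, ih (by omega)]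

lemma downW_support (hg : 3 ≤ g) (hgn : g ≤ n) (k : ℕ) (hk : k < g) :
    ∀ x ∈ (downW n g a b hg hgn k hk).support, x.val ≤ k := by
  induction k with
  | zero =>
    intro x hx
    rw [downW] at hx
    simp only [SimpleGraph.Walk.support_nil, List.mem_singleton] at hx
    simp [hx]
  | succ m ih =>
    intro x hx
    rw [downW] at hx
    simp only [SimpleGraph.Walk.support_cons, List.mem_cons] at hx
    rcases hx with rfl | hx
    · simp
    · exact le_trans (ih (by omega) x hx) (by omega)

lemma downW_isPath (hg : 3 ≤ g) (hgn : g ≤ n) (k : ℕ) (hk : k < g) :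
    (downW n g a b hg hgn k hk).IsPath := by
  induction k with
  | zero => simp [downW]
  | succ m ih =>
    rw [downW, SimpleGraph.Walk.cons_isPath_iff]
    refine ⟨ih (by omega), fun hmem => ?_⟩
    have := downW_support hg hgn m (by omega) _ hmem
    simp at this
  
lemma downW_edges (hg : 3 ≤ g) (hgn : g ≤ n) (k : ℕ) (hk : k < g) :
    ∀ e ∈ (downW n g a b hg hgn k hk).edges,
      ∃ (j : ℕ) (hj : j + 1 ≤ k), e = s((⟨j+1, by omega⟩ : Fin n), (⟨j, by omega⟩ : Fin n)) := by
  induction k with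
  | zero => intro e he; rw [downW] at he; simp at he
  | succ m ih =>
    intro e he
    rw [downW] at he
    simp only [SimpleGraph.Walk.edges_cons, List.mem_cons] at he
    rcases he with rfl | he
    · exact ⟨m, by omega, rfl⟩
    · obtain ⟨j, hj, hej⟩ := ih (by omega) e he
      exact ⟨j, by omega, hej⟩

def cycG (n g a b : ℕ) (hg : 3 ≤ g) (hgn : g ≤ n) :
    (Gs n g a b).Walk ⟨0, zero_lt_n hg hgn⟩ ⟨0, zero_lt_n hg hgn⟩ :=
  SimpleGraph.Walk.cons (adj_0g1 n g a b hg hgn) (downW n g a b hg hgn (g-1) (gsub1_lt hg))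

lemma cycG_isCycle (hg : 3 ≤ g) (hgn : g ≤ n) : (cycG n g a b hg hgn).IsCycle := by
  rw [cycG, SimpleGraph.Walk.cons_isCycle_iff]
  refine ⟨downW_isPath hg hgn _ _, fun hmem => ?_⟩
  obtain ⟨j, hj, hej⟩ := downW_edges hg hgn _ _ _ hmem
  rw [Sym2.eq_iff] at hej
  rcases hej with ⟨e1, e2⟩ | ⟨e1, e2⟩ <;>
  · have v1 := congrArg Fin.val e1
    have v2 := congrArg Fin.val e2
    try dsimp only at v1
    try dsimp only at v2
    omega

lemma cycG_length (hg : 3 ≤ g) (hgn : g ≤ n) : (cycG n g a b hg hgn).length = g := by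
  rw [cycG, SimpleGraph.Walk.length_cons, downW_length]
  omega

lemma Gs_connected (hg : 3 ≤ g) (hnn : n = g + 2*a + b) (hgn : g ≤ n) :
    (Gs n g a b).Connected := by
  rw [SimpleGraph.connected_iff]
  have hn0 : 0 < n := by omega
  refine ⟨?_, ⟨⟨0, hn0⟩⟩⟩
  have hreach : ∀ v : Fin n, (Gs n g a b).Reachable v ⟨0, hn0⟩ := by
    intro v
    by_cases h1 : v.val < g
    · have : v = ⟨v.val, by omega⟩ := by apply Fin.ext; rfl
      rw [this]
      exact ⟨downW n g a b hg hgn v.val h1⟩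
    · have hstar : ∀ w : Fin n, g ≤ w.val → w.val < g + a + b →
          (Gs n g a b).Reachable w ⟨0, hn0⟩ := by
        intro w hw1 hw2
        refine SimpleGraph.Adj.reachable ?_
        rw [Gs_adj_val]
        dsimp only
        simp only [ER, true_and, and_true, false_and, and_false, or_false, false_or, true_or, or_true]
        all_goals omega
      by_cases h2 : v.val < g + a + b
      · exact hstar v (by omega) h2
      · have hadj : (Gs n g a b).Adj v ⟨v.val - (a+b), by have := v.isLt; omega⟩ := by
          rw [Gs_adj_val]
          dsimp only
          simp only [ER, true_and, and_true, false_and, and_false, or_false, false_or, true_or, or_true]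
          have := v.isLt
          all_goals omega
        exact hadj.reachable.trans (hstar _ (by dsimp only; omega)
          (by dsimp only; have := v.isLt; omega))
  intro u v
  exact (hreach u).trans (hreach v).symm

end Walks

section Girth

variable {n g a b : ℕ}

def par (g a b : ℕ) {n : ℕ} (v : Fin n) : Fin n :=
  if v.val < g then ⟨v.val - 1, by have := v.isLt; omega⟩
  else if v.val < g + a + b then ⟨0, v.pos⟩
  else ⟨v.val - (a + b), by have := v.isLt; omega⟩

def eEdge (n g : ℕ) (hg : 3 ≤ g) (hgn : g ≤ n) : Sym2 (Fin n) :=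
  s(⟨0, zero_lt_n hg hgn⟩, ⟨g-1, lt_n_of_lt (gsub1_lt hg) hgn⟩)

def pot (g : ℕ) {n : ℕ} (v : Fin n) : ℤ := if v.val < g then (v.val : ℤ) else 0

lemma par_helper (hg : 3 ≤ g) (hb : 1 ≤ b) (x y : Fin n)
    (hER : ER g a b x.val y.val) (hgn : g ≤ n) (hne : s(x, y) ≠ eEdge n g hg hgn) :
    x = par g a b y ∧ par g a b y < y := by
  rcases hER with ⟨h1, h2⟩ | ⟨h1, h2⟩ | ⟨h1, h2, h3⟩ | ⟨h1, h2, h3⟩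
  · constructor
    · apply Fin.ext
      rw [par, if_pos h2]
      dsimp only
      omega
    · rw [Fin.lt_def, par, if_pos h2]
      dsimp only
      omega
  · exact absurd (by
      rw [eEdge, Sym2.eq_iff]
      left
      exact ⟨Fin.ext (by dsimp only; omega), Fin.ext (by dsimp only; omega)⟩) hne
  · constructor
    · apply Fin.ext
      rw [par, if_neg (by omega), if_pos h3]
      dsimp only
      omega
    · rw [Fin.lt_def, par, if_neg (by omega), if_pos h3]
      dsimp only
      omega
  · constructor
    · apply Fin.ext
      rw [par, if_neg (by omega), if_neg (by omega)]
      dsimp only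
      omega
    · rw [Fin.lt_def, par, if_neg (by omega), if_neg (by omega)]
      dsimp only
      omega

lemma H_acyclic (hg : 3 ≤ g) (hb : 1 ≤ b) (hgn : g ≤ n) :
    ((Gs n g a b).deleteEdges {eEdge n g hg hgn}).IsAcyclic := by
  apply isAcyclic_of_parent (par g a b)
  intro x y hxy
  rw [SimpleGraph.deleteEdges_adj] at hxy
  obtain ⟨hadj, hne⟩ := hxy
  rw [Set.mem_singleton_iff] at hne
  rw [Gs_adj_val] at hadj
  rcases hadj.2 with h | h
  · exact Or.inl (par_helper hg hb x y h hgn hne)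
  · refine Or.inr (par_helper hg hb y x h hgn ?_)
    rw [Sym2.eq_swap]
    exact hne

lemma pot_helper (hg : 3 ≤ g) (hgn : g ≤ n) (x y : Fin n) (hER : ER g a b x.val y.val)
    (hne : s(x, y) ≠ eEdge n g hg hgn) : |pot g x - pot g y| ≤ 1 := by
  rcases hER with ⟨h1, h2⟩ | ⟨h1, h2⟩ | ⟨h1, h2, h3⟩ | ⟨h1, h2, h3⟩
  · rw [pot, pot, if_pos (by omega), if_pos h2, abs_le]
    constructor <;> push_cast <;> omega
  · exact absurd (by
      rw [eEdge, Sym2.eq_iff]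
      left
      exact ⟨Fin.ext (by dsimp only; omega), Fin.ext (by dsimp only; omega)⟩) hne
  · rw [pot, pot, if_pos (by omega), if_neg (by omega), h1]
    simp
  · rw [pot, pot, if_neg (by omega), if_neg (by omega)]
    simp

lemma pot_step (hg : 3 ≤ g) (hgn : g ≤ n) :
    ∀ x y : Fin n, ((Gs n g a b).deleteEdges {eEdge n g hg hgn}).Adj x y →
      |pot g x - pot g y| ≤ 1 := by
  intro x y hxy
  rw [SimpleGraph.deleteEdges_adj] at hxy
  obtain ⟨hadj, hne⟩ := hxy
  rw [Set.mem_singleton_iff] at hne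
  rw [Gs_adj_val] at hadj
  rcases hadj.2 with h | h
  · exact pot_helper hg hgn x y h hne
  · rw [abs_sub_comm]
    exact pot_helper hg hgn y x h (by rw [Sym2.eq_swap]; exact hne)

lemma walk_pot (hg : 3 ≤ g) (hgn : g ≤ n) {x y : Fin n} (w : (Gs n g a b).Walk x y)
    (hw : ∀ e' ∈ w.edges, e' ∉ ({eEdge n g hg hgn} : Set (Sym2 (Fin n)))) :
    |pot g x - pot g y| ≤ (w.length : ℤ) := by
  have h1 := abs_potential (pot g) (pot_step hg hgn) (w.toDeleteEdges _ hw)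
  rwa [SimpleGraph.Walk.length_transfer] at h1

end Girth

section Girth2

variable {n g a b : ℕ}

lemma Gs_cycles_long (hg : 3 ≤ g) (hb : 1 ≤ b) (hgn : g ≤ n) (v : Fin n)
    (c : (Gs n g a b).Walk v v) (hc : c.IsCycle) : g ≤ c.length := by
  set e := eEdge n g hg hgn with hedef
  have he : e ∈ c.edges := by
    by_contra hx
    have hfor : ∀ e' ∈ c.edges, e' ∉ ({e} : Set (Sym2 (Fin n))) := by
      intro e' h' hmem
      rw [Set.mem_singleton_iff] at hmem
      rw [hmem] at h'
      exact hx h'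
    exact H_acyclic hg hb hgn (c.toDeleteEdges {e} hfor) (by exact SimpleGraph.Walk.IsCycle.toDeleteEdges _ _ hc hfor)
  have hg1mem : (⟨g-1, lt_n_of_lt (gsub1_lt hg) hgn⟩ : Fin n) ∈ c.support :=
    SimpleGraph.Walk.snd_mem_support_of_mem_edges c he
  have hc2 : (c.rotate _ hg1mem).IsCycle := hc.rotate _
  have hrot := SimpleGraph.Walk.rotate_edges c _ hg1mem
  have hlen2 : (c.rotate _ hg1mem).length = c.length := by
    have h := hrot.perm.length_eq
    rwa [SimpleGraph.Walk.length_edges, SimpleGraph.Walk.length_edges] at h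
  have he2 : e ∈ (c.rotate _ hg1mem).edges := hrot.mem_iff.mpr he
  rw [← hlen2]
  obtain ⟨w0, hadj, q, hq⟩ := SimpleGraph.Walk.not_nil_iff.mp hc2.not_nil
  rw [hq] at hc2 he2 ⊢
  have hcons := (SimpleGraph.Walk.cons_isCycle_iff q hadj).mp hc2
  have hw0 : w0.val = 0 ∨ w0.val = g - 2 := by
    have h' := hadj
    rw [Gs_adj_val] at h'
    obtain ⟨h'1, h'2⟩ := h'
    dsimp only at h'1 h'2
    simp only [ER] at h'2
    omega
  rw [SimpleGraph.Walk.length_cons]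
  rcases hw0 with hw0 | hw0
  · -- first edge is e
    have hee : e = s((⟨g-1, lt_n_of_lt (gsub1_lt hg) hgn⟩ : Fin n), w0) := by
      rw [hedef, eEdge, Sym2.eq_iff]
      right
      exact ⟨Fin.ext (by dsimp only; omega), rfl⟩
    have hne : ∀ e' ∈ q.edges, e' ∉ ({e} : Set (Sym2 (Fin n))) := by
      intro e' h' hmem
      rw [Set.mem_singleton_iff] at hmem
      rw [hmem, hee] at h'
      exact hcons.2 h'
    have habs := walk_pot hg hgn q hne
    have hp1 : pot g w0 = 0 := by
      rw [pot, if_pos (by omega), hw0]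
      norm_num
    have hp2 : pot g (⟨g-1, lt_n_of_lt (gsub1_lt hg) hgn⟩ : Fin n) = ((g-1 : ℕ) : ℤ) := by
      rw [pot, if_pos (by dsimp only; omega)]
    rw [hp1, hp2, zero_sub, abs_neg, abs_of_nonneg (Nat.cast_nonneg _)] at habs
    omega
  · -- first edge is not e ; find e as the last edge of q
    have hvne : (⟨g-1, lt_n_of_lt (gsub1_lt hg) hgn⟩ : Fin n) ≠ w0 := by
      intro hEq
      have := congrArg Fin.val hEq
      dsimp only at this
      omega
    have heq : e ∈ q.edges := by
      rw [SimpleGraph.Walk.edges_cons] at he2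
      rcases List.mem_cons.mp he2 with h1 | h1
      · exfalso
        rw [hedef, eEdge, Sym2.eq_iff] at h1
        rcases h1 with ⟨e1, e2⟩ | ⟨e1, e2⟩ <;>
        · have v1 := congrArg Fin.val e1
          have v2 := congrArg Fin.val e2
          try dsimp only at v1
          try dsimp only at v2
          omega
      · exact h1
    obtain ⟨z, hadj2, q2, hq2⟩ := SimpleGraph.Walk.exists_eq_cons_of_ne hvne q.reverse
    have hqrev : q.reverse.IsPath := hcons.1.reverse
    rw [hq2] at hqrev
    have hq2path := (SimpleGraph.Walk.cons_isPath_iff _ _).mp hqrev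
    have hnq2 : e ∉ q2.edges := by
      intro h1
      exact hq2path.2 (SimpleGraph.Walk.snd_mem_support_of_mem_edges q2 h1)
    have heq' : e ∈ q.reverse.edges := by
      rw [SimpleGraph.Walk.edges_reverse, List.mem_reverse]
      exact heq
    rw [hq2, SimpleGraph.Walk.edges_cons] at heq'
    have hz : z.val = 0 := by
      rcases List.mem_cons.mp heq' with h1 | h1
      · rw [hedef, eEdge, Sym2.eq_iff] at h1
        rcases h1 with ⟨e1, e2⟩ | ⟨e1, e2⟩ <;>
        · have v1 := congrArg Fin.val e1
          have v2 := congrArg Fin.val e2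
          try dsimp only at v1
          try dsimp only at v2
          omega
      · exact absurd h1 hnq2
    have habs := walk_pot hg hgn q2 (by
      intro e' h' hmem
      rw [Set.mem_singleton_iff] at hmem
      rw [hmem] at h'
      exact hnq2 h')
    have hp1 : pot g z = 0 := by
      rw [pot, if_pos (by omega), hz]
      norm_num
    have hp2 : pot g w0 = ((g-2 : ℕ) : ℤ) := by
      rw [pot, if_pos (by omega), hw0]
    rw [hp1, hp2, zero_sub, abs_neg, abs_of_nonneg (Nat.cast_nonneg _)] at habs
    have hql : q.length = q2.length + 1 := by
      have h := congrArg SimpleGraph.Walk.length hq2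
      rwa [SimpleGraph.Walk.length_reverse, SimpleGraph.Walk.length_cons] at h
    omega

lemma Gs_girth (hg : 3 ≤ g) (hb : 1 ≤ b) (hgn : g ≤ n) : (Gs n g a b).girth = g := by
  have hle : (Gs n g a b).egirth ≤ (g : ℕ∞) := by
    have h1 : (Gs n g a b).egirth ≤ ((cycG n g a b hg hgn).length : ℕ∞) := by
      rw [SimpleGraph.egirth]
      exact iInf₂_le_of_le ⟨0, zero_lt_n hg hgn⟩ (cycG n g a b hg hgn)
        (iInf_le _ (cycG_isCycle hg hgn))
    rwa [cycG_length hg hgn] at h1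
  have hge : (g : ℕ∞) ≤ (Gs n g a b).egirth := by
    rw [SimpleGraph.le_egirth]
    intro v w hw
    exact_mod_cast Nat.cast_le.mpr (Gs_cycles_long hg hb hgn v w hw)
  have : (Gs n g a b).egirth = (g : ℕ∞) := le_antisymm hle hge
  rw [SimpleGraph.girth, this, ENat.toNat_coe]

end Girth2

section Matching

variable {n g a b : ℕ}

lemma matching_le (hg : 3 ≤ g) (hgo : g % 2 = 1) (hb : 1 ≤ b)
    (hnn : n = g + 2*a + b) (hgn : g ≤ n) (M : (Gs n g a b).Subgraph) (hM : M.IsMatching) :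
    M.edgeSet.ncard ≤ g / 2 + 1 + a := by
  classical
  set Φ := phi (n := n) g a b hgn with hΦ
  have hinjΦ := phi_inj hg hnn hgn (n := n) (a := a) (b := b)
  set I1 : Set (Fin n) := {i | Φ i ∈ M.edgeSet ∧ i.val < g} with hI1
  set I2 : Set (Fin n) := {i | Φ i ∈ M.edgeSet ∧ g ≤ i.val ∧ i.val < g + a + b} with hI2
  set I3 : Set (Fin n) := {i | Φ i ∈ M.edgeSet ∧ g + a + b ≤ i.val} with hI3
  have him : M.edgeSet = Φ '' (I1 ∪ I2 ∪ I3) := by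
    apply Set.eq_of_subset_of_subset
    · intro e he
      obtain ⟨i, hi⟩ := phi_surj hg hnn hgn e (M.edgeSet_subset he)
      refine ⟨i, ?_, hi.symm⟩
      rw [hi] at he
      simp only [hI1, hI2, hI3, Set.mem_union, Set.mem_setOf_eq]
      by_cases h1 : i.val < g
      · exact Or.inl (Or.inl ⟨he, h1⟩)
      · by_cases h2 : i.val < g + a + b
        · exact Or.inl (Or.inr ⟨he, by omega, h2⟩)
        · exact Or.inr ⟨he, by omega⟩
    · rintro e ⟨i, hi, rfl⟩
      simp only [hI1, hI2, hI3, Set.mem_union, Set.mem_setOf_eq] at hi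
      tauto
  rw [him, Set.ncard_image_of_injective _ hinjΦ]
  have hb3 : I3.ncard ≤ a := by
    have hmaps : ∀ i ∈ I3, (fun (i : Fin n) => i.val - (g+a+b)) i ∈ ((Finset.range a : Finset ℕ) : Set ℕ) := by
      intro i hi
      simp only [hI3, Set.mem_setOf_eq] at hi
      have := i.isLt
      simp only [Finset.mem_coe, Finset.mem_range]
      omega
    have hinj3 : Set.InjOn (fun (i : Fin n) => i.val - (g+a+b)) I3 := by
      intro i hi j hj hij
      simp only [hI3, Set.mem_setOf_eq] at hi hj
      simp only at hij
      apply Fin.ext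
      omega
    have := Set.ncard_le_ncard_of_injOn _ hmaps hinj3 (Finset.finite_toSet (Finset.range a))
    rwa [Set.ncard_coe_finset, Finset.card_range] at this
  have hb2 : I2.ncard ≤ 1 := by
    rw [Set.ncard_le_one (Set.toFinite _)]
    intro i hi j hj
    simp only [hI2, Set.mem_setOf_eq] at hi hj
    have hpi : M.Adj ⟨0, i.pos⟩ i := by
      have := hi.1
      rw [hΦ, phi, dif_neg (by omega), if_pos (by omega)] at this
      exact SimpleGraph.Subgraph.mem_edgeSet.mp this
    have hpj : M.Adj ⟨0, i.pos⟩ j := by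
      have := hj.1
      rw [hΦ, phi, dif_neg (by omega), if_pos (by omega)] at this
      exact SimpleGraph.Subgraph.mem_edgeSet.mp this
    obtain ⟨w, _, huniq⟩ := hM (M.edge_vert hpi)
    rw [huniq i hpi, huniq j hpj]
  have hb1 : I1.ncard ≤ g / 2 := by
    haveI : NeZero g := ⟨by omega⟩
    set ψ : Fin n → ZMod g := fun i => (i.val : ZMod g) with hψ
    have hinj : Set.InjOn ψ I1 := by
      intro i hi j hj hij
      simp only [hI1, Set.mem_setOf_eq] at hi hj
      have := congrArg ZMod.val hij
      rw [hψ] at this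
      simp only [ZMod.val_natCast_of_lt hi.2, ZMod.val_natCast_of_lt hj.2] at this
      exact Fin.ext this
    have key : ∀ i ∈ I1, ∀ j ∈ I1, ψ i = ψ j + 1 → False := by
      intro i hi j hj hij
      simp only [hI1, Set.mem_setOf_eq] at hi hj
      have hival : i.val = (j.val + 1) % g := by
        have h1 : ((j.val + 1 : ℕ) : ZMod g) = ψ j + 1 := by push_cast [hψ]; ring
        have := congrArg ZMod.val (hij.trans h1.symm)
        rwa [hψ, ZMod.val_natCast_of_lt hi.2, ZMod.val_natCast] at this
      -- phi j has endpoints j and i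
      have hadjj : M.Adj j i := by
        have h0 := hj.1
        rw [hΦ, phi, dif_pos hj.2] at h0
        have h0' := SimpleGraph.Subgraph.mem_edgeSet.mp h0
        have h2 : (⟨(j.val + 1) % g, by
            have : (j.val + 1) % g < g := Nat.mod_lt _ (by omega)
            omega⟩ : Fin n) = i := Fin.ext (by dsimp only; omega)
        rw [h2] at h0'
        exact h0' 
      have hadji : M.Adj i ⟨(i.val + 1) % g, by
          have : (i.val + 1) % g < g := Nat.mod_lt _ (by omega)
          omega⟩ := by
        have := hi.1
        rw [hΦ, phi, dif_pos hi.2] at this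
        exact SimpleGraph.Subgraph.mem_edgeSet.mp this
      obtain ⟨w, _, huniq⟩ := hM (M.edge_vert hadji)
      have hji := huniq j hadjj.symm
      have hki := huniq _ hadji
      have : j.val = (i.val + 1) % g := by
        have := congrArg Fin.val (hji.trans hki.symm)
        dsimp only at this
        omega
      rcases succ_mod g i.val hi.2 with ⟨hmi, hlti⟩ | ⟨hei, hmi⟩ <;>
        rcases succ_mod g j.val hj.2 with ⟨hmj, hltj⟩ | ⟨hej, hmj⟩ <;> omega
    have hS : (ψ '' I1).ncard = I1.ncard := Set.ncard_image_of_injOn hinj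
    have hT : ((fun x => x + 1) '' (ψ '' I1)).ncard = (ψ '' I1).ncard :=
      Set.ncard_image_of_injective _ (add_left_injective 1)
    have hdisj : Disjoint (ψ '' I1) ((fun x => x + 1) '' (ψ '' I1)) := by
      rw [Set.disjoint_left]
      rintro x ⟨i, hi, rfl⟩ ⟨y, ⟨j, hj, rfl⟩, hyx⟩
      exact key i hi j hj hyx.symm
    have hun : (ψ '' I1).ncard + ((fun x => x + 1) '' (ψ '' I1)).ncard ≤ g := by
      rw [← Set.ncard_union_eq hdisj (Set.toFinite _) (Set.toFinite _)]
      have := Set.ncard_le_ncard (Set.subset_univ ((ψ '' I1) ∪ ((fun x => x + 1) '' (ψ '' I1))))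
        (Set.toFinite _)
      rwa [Set.ncard_univ, Nat.card_eq_fintype_card, ZMod.card] at this
    omega
  calc (I1 ∪ I2 ∪ I3).ncard ≤ (I1 ∪ I2).ncard + I3.ncard := Set.ncard_union_le _ _
    _ ≤ I1.ncard + I2.ncard + I3.ncard := by
        have := Set.ncard_union_le I1 I2
        omega
    _ ≤ g / 2 + 1 + a := by omega

end Matching

section MatchingLower

variable {n g a b : ℕ}

def mrel (g a b x y : ℕ) : Prop :=
  (x = 0 ∧ y = g + a) ∨ (x % 2 = 1 ∧ x < g ∧ y = x + 1) ∨ (g ≤ x ∧ x < g + a ∧ y = x + a + b)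

def mpart (g a b x : ℕ) : ℕ :=
  if x = 0 then g + a
  else if x < g then (if x % 2 = 1 then x + 1 else x - 1)
  else if x < g + a then x + a + b
  else if x = g + a then 0
  else x - (a + b)

lemma mrel_part (hg : 3 ≤ g) (hgo : g % 2 = 1) (hb : 1 ≤ b) (x y : ℕ)
    (h : mrel g a b x y ∨ mrel g a b y x) : y = mpart g a b x := by
  rw [mpart]
  simp only [mrel] at h
  split_ifs <;> omega

lemma mrel_ER (hg : 3 ≤ g) (hgo : g % 2 = 1) (hb : 1 ≤ b) (x y : ℕ)
    (h : mrel g a b x y) : ER g a b x y ∧ x ≠ y := by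
  simp only [mrel] at h
  simp only [ER]
  omega

def Msub (n g a b : ℕ) (hg : 3 ≤ g) (hgo : g % 2 = 1) (hb : 1 ≤ b) :
    (Gs n g a b).Subgraph where
  verts := {v | ∃ w : Fin n, mrel g a b v.val w.val ∨ mrel g a b w.val v.val}
  Adj := fun u v => mrel g a b u.val v.val ∨ mrel g a b v.val u.val
  adj_sub := by
    intro u v h
    rw [Gs_adj_val]
    rcases h with h | h
    · obtain ⟨h1, h2⟩ := mrel_ER hg hgo hb _ _ h
      exact ⟨h2, Or.inl h1⟩
    · obtain ⟨h1, h2⟩ := mrel_ER hg hgo hb _ _ h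
      exact ⟨h2.symm, Or.inr h1⟩
  edge_vert := fun h => ⟨_, h⟩
  symm := ⟨fun u v h => h.symm⟩

lemma Msub_isMatching (hg : 3 ≤ g) (hgo : g % 2 = 1) (hb : 1 ≤ b) :
    (Msub n g a b hg hgo hb).IsMatching := by
  intro v hv
  obtain ⟨w, hw⟩ := hv
  refine ⟨w, hw, fun y hy => ?_⟩
  have h1 := mrel_part hg hgo hb v.val y.val hy
  have h2 := mrel_part hg hgo hb v.val w.val hw
  exact Fin.ext (h1.trans h2.symm)

lemma Msub_edgeSet (hg : 3 ≤ g) (hgo : g % 2 = 1) (hga : g ≤ a) (hb : 1 ≤ b)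
    (hnn : n = g + 2*a + b) (hgn : g ≤ n) :
    (Msub n g a b hg hgo hb).edgeSet =
      phi g a b hgn '' {i : Fin n |
        (i.val < g ∧ i.val % 2 = 1) ∨ i.val = g + a ∨ g + a + b ≤ i.val} := by
  have main : ∀ u v : Fin n, mrel g a b u.val v.val →
      ∃ i, ((i.val < g ∧ i.val % 2 = 1) ∨ i.val = g + a ∨ g + a + b ≤ i.val) ∧
        s(u, v) = phi g a b hgn i := by
    intro u v h
    rcases h with ⟨h1, h2⟩ | ⟨h1, h2, h3⟩ | ⟨h1, h2, h3⟩
    · refine ⟨v, Or.inr (Or.inl h2), ?_⟩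
      rw [phi, dif_neg (by omega), if_pos (by omega), Sym2.eq_iff]
      left
      exact ⟨Fin.ext (by dsimp only; omega), rfl⟩
    · refine ⟨u, Or.inl ⟨h2, h1⟩, ?_⟩
      rw [phi, dif_pos h2, Sym2.eq_iff]
      left
      refine ⟨rfl, Fin.ext ?_⟩
      dsimp only
      rw [Nat.mod_eq_of_lt (by omega)]
      omega
    · refine ⟨v, Or.inr (Or.inr (by omega)), ?_⟩
      rw [phi, dif_neg (by omega), if_neg (by omega), Sym2.eq_iff]
      left
      exact ⟨Fin.ext (by dsimp only; omega), rfl⟩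
  apply Set.eq_of_subset_of_subset
  · intro e he
    induction e with
    | _ u v =>
      have hadj := SimpleGraph.Subgraph.mem_edgeSet.mp he
      rcases hadj with h | h
      · obtain ⟨i, hi, hie⟩ := main u v h
        exact ⟨i, hi, hie.symm⟩
      · obtain ⟨i, hi, hie⟩ := main v u h
        exact ⟨i, hi, by rw [Sym2.eq_swap] at hie; exact hie.symm⟩
  · rintro e ⟨i, hi, rfl⟩
    rw [Set.mem_setOf_eq] at hi
    rcases hi with ⟨h1, h2⟩ | h1 | h1
    · rw [phi, dif_pos h1]
      apply SimpleGraph.Subgraph.mem_edgeSet.mpr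
      left
      refine Or.inr (Or.inl ⟨h2, h1, ?_⟩)
      dsimp only
      rw [Nat.mod_eq_of_lt (by omega)]
    · rw [phi, dif_neg (by omega), if_pos (by omega)]
      apply SimpleGraph.Subgraph.mem_edgeSet.mpr
      left
      exact Or.inl ⟨rfl, h1⟩
    · rw [phi, dif_neg (by omega), if_neg (by omega)]
      apply SimpleGraph.Subgraph.mem_edgeSet.mpr
      left
      have := i.isLt
      refine Or.inr (Or.inr ⟨by dsimp only; omega, by dsimp only; omega, by dsimp only; omega⟩)

end MatchingLower

section Count

variable {n g a b : ℕ}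

lemma card_odd_filter (m : ℕ) : ((Finset.range m).filter (fun k => k % 2 = 1)).card = m / 2 := by
  induction m with
  | zero => rfl
  | succ k ih =>
    rw [Finset.range_add_one, Finset.filter_insert]
    split_ifs with h
    · rw [Finset.card_insert_of_notMem (by simp), ih]
      omega
    · rw [ih]
      omega

lemma card_filter_fin (n : ℕ) (p : ℕ → Prop) [DecidablePred p] :
    (Finset.univ.filter (fun i : Fin n => p i.val)).card = ((Finset.range n).filter p).card := by
  refine Finset.card_bij (fun i _ => i.val) ?_ ?_ ?_
  · intro i hi
    rw [Finset.mem_filter] at hi ⊢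
    exact ⟨Finset.mem_range.mpr i.isLt, hi.2⟩
  · intro i _ j _ hij
    exact Fin.ext hij
  · intro k hk
    rw [Finset.mem_filter, Finset.mem_range] at hk
    exact ⟨⟨k, hk.1⟩, Finset.mem_filter.mpr ⟨Finset.mem_univ _, hk.2⟩, rfl⟩

lemma Msub_ncard (hg : 3 ≤ g) (hgo : g % 2 = 1) (hga : g ≤ a) (hb : 1 ≤ b)
    (hnn : n = g + 2*a + b) (hgn : g ≤ n) :
    (Msub n g a b hg hgo hb).edgeSet.ncard = g / 2 + 1 + a := by
  classical
  rw [Msub_edgeSet hg hgo hga hb hnn hgn, Set.ncard_image_of_injective _ (phi_inj hg hnn hgn)]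
  have hset : {i : Fin n | (i.val < g ∧ i.val % 2 = 1) ∨ i.val = g + a ∨ g + a + b ≤ i.val}
      = ↑(Finset.univ.filter (fun i : Fin n =>
          (i.val < g ∧ i.val % 2 = 1) ∨ i.val = g + a ∨ g + a + b ≤ i.val)) := by
    ext i
    simp
  rw [hset, Set.ncard_coe_finset, card_filter_fin n (fun k => (k < g ∧ k % 2 = 1) ∨ k = g + a ∨ g + a + b ≤ k)]
  have hsplit : (Finset.range n).filter (fun k => (k < g ∧ k % 2 = 1) ∨ k = g + a ∨ g + a + b ≤ k)
      = (((Finset.range g).filter (fun k => k % 2 = 1)) ∪ {g + a}) ∪ Finset.Ico (g+a+b) n := by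
    ext k
    simp only [Finset.mem_filter, Finset.mem_range, Finset.mem_union, Finset.mem_singleton,
      Finset.mem_Ico]
    omega
  have hd1 : Disjoint ((Finset.range g).filter (fun k => k % 2 = 1)) ({g + a} : Finset ℕ) := by
    rw [Finset.disjoint_singleton_right, Finset.mem_filter, Finset.mem_range]
    omega
  have hd2 : Disjoint (((Finset.range g).filter (fun k => k % 2 = 1)) ∪ {g + a})
      (Finset.Ico (g+a+b) n) := by
    rw [Finset.disjoint_left]
    intro k hk1 hk2
    simp only [Finset.mem_union, Finset.mem_filter, Finset.mem_range,
      Finset.mem_singleton] at hk1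
    rw [Finset.mem_Ico] at hk2
    omega
  rw [hsplit, Finset.card_union_of_disjoint hd2, Finset.card_union_of_disjoint hd1,
    card_odd_filter, Finset.card_singleton, Nat.card_Ico]
  omega

lemma Gs_matchingNumber (hg : 3 ≤ g) (hgo : g % 2 = 1) (hga : g ≤ a) (hb : 1 ≤ b)
    (hnn : n = g + 2*a + b) (hgn : g ≤ n) :
    matchingNumber (Gs n g a b) = g / 2 + 1 + a := by
  apply IsGreatest.csSup_eq
  constructor
  · exact ⟨Msub n g a b hg hgo hb, Msub_isMatching hg hgo hb,
      Msub_ncard hg hgo hga hb hnn hgn⟩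
  · rintro k ⟨M, hM, rfl⟩
    exact matching_le hg hgo hb hnn hgn M hM

end Count

/-- For odd `g ≥ 3` and `n ≥ 2β ≥ 3g`, `G*_{(n,g,β)}` is a unicyclic graph (connected with
exactly as many edges as vertices) of order `n` with girth `g` and matching number `β`. -/
theorem GstarOdd_unicyclic (n g β : ℕ) (hodd : Odd g) (hg : 3 ≤ g)
    (hβ : 3 * g ≤ 2 * β) (hn : 2 * β ≤ n) :
    (GstarOdd n g β).Connected ∧ (GstarOdd n g β).edgeSet.ncard = n ∧
      (GstarOdd n g β).girth = g ∧ matchingNumber (GstarOdd n g β) = β := by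
  have hgo : g % 2 = 1 := Nat.odd_iff.mp hodd
  have key : GstarOdd n g β = Gs n g (β - (g+1)/2) (n - 2*β + 1) := rfl
  have hga : g ≤ β - (g+1)/2 := by omega
  have hb : 1 ≤ n - 2*β + 1 := by omega
  have hnn : n = g + 2*(β - (g+1)/2) + (n - 2*β + 1) := by omega
  have hgn : g ≤ n := by omega
  rw [key]
  refine ⟨Gs_connected hg hnn hgn, Gs_edgeSet_ncard hg hnn hgn, Gs_girth hg hb hgn, ?_⟩
  rw [Gs_matchingNumber hg hgo hga hb hnn hgn]
  omega
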